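/- Let d ≥ 1, n ≥ d + 4, and δ > 1. Let P_1, …, P_n be points in ℝ^d whose pairwise distances all lie in {1, δ}, arranged so that for some h with 0 ≤ h ≤ n−1, ‖P_i − P_n‖ = 1 for 1 ≤ i ≤ h and ‖P_i − P_n‖ = δ for h < i ≤ n−1. Let S = (2M + D − (1 + δ²)·I)/(δ² − 1) be the associated (n−1)×(n−1) Seidel matrix, where M_{ij} = ‖P_i − P_n‖² + ‖P_j − P_n‖² − ‖P_i − P_j‖² and D_{ij} equals δ²−3 if i, j ≤ h, equals −(1+δ²) if exactly one of i, j is ≤ h, and equals 1−3δ² if i, j > h. Set c = (1 + δ²)/(1 − δ²). Then (X − c)^{n−d−3} divides the characteristic polynomial of S, and, counting multiplicities, S has at most one eigenvalue strictly less than c. -/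

import Mathlib

open Polynomial

section Aux
open Matrix

lemma aux_charpoly_conj {m : Type*} [Fintype m] [DecidableEq m]
    (U : Matrix.unitaryGroup m ℝ) (Dg : Matrix m m ℝ) :
    ((U : Matrix m m ℝ) * Dg * star (U : Matrix m m ℝ)).charpoly = Dg.charpoly := by
  have hU : (U : Matrix m m ℝ) * star (U : Matrix m m ℝ) = 1 :=
    (Matrix.mem_unitaryGroup_iff).mp U.2
  have h1 : ((U : Matrix m m ℝ).map C) * ((star (U : Matrix m m ℝ)).map C) = 1 := by
    rw [← Matrix.map_mul, hU]; simp
  have key : charmatrix ((U : Matrix m m ℝ) * Dg * star (U : Matrix m m ℝ)) =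
      ((U : Matrix m m ℝ).map C) * charmatrix Dg * ((star (U : Matrix m m ℝ)).map C) := by
    rw [charmatrix, charmatrix, Matrix.mul_sub, Matrix.sub_mul]
    congr 1
    · have hcomm : ((U : Matrix m m ℝ).map C) * Matrix.scalar m (X : ℝ[X]) =
          Matrix.scalar m (X : ℝ[X]) * ((U : Matrix m m ℝ).map C) :=
        (Matrix.scalar_commute (X : ℝ[X]) (fun r => Commute.all _ _) _).symm
      rw [hcomm, Matrix.mul_assoc, h1, Matrix.mul_one]
    · simp only [RingHom.mapMatrix_apply, ← Matrix.map_mul]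
  have hdet : ((U : Matrix m m ℝ).map C).det * ((star (U : Matrix m m ℝ)).map C).det = 1 := by
    rw [← det_mul, h1, det_one]
  rw [Matrix.charpoly, key, det_mul, det_mul, Matrix.charpoly]
  calc ((U : Matrix m m ℝ).map C).det * (charmatrix Dg).det *
        ((star (U : Matrix m m ℝ)).map C).det
      = (charmatrix Dg).det * (((U : Matrix m m ℝ).map C).det *
        ((star (U : Matrix m m ℝ)).map C).det) := by ring
    _ = (charmatrix Dg).det := by rw [hdet, mul_one]

lemma aux_herm_charpoly {m : ℕ} {A : Matrix (Fin m) (Fin m) ℝ} (hA : A.IsHermitian) :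
    A.charpoly = ∏ i, (X - C (hA.eigenvalues i)) := by
  conv_lhs => rw [hA.spectral_theorem, Unitary.conjStarAlgAut_apply, aux_charpoly_conj]
  rw [Matrix.charpoly_of_upperTriangular _ (Matrix.blockTriangular_diagonal _)]
  refine Finset.prod_congr rfl fun i _ => ?_
  simp

lemma aux_herm_roots {m : ℕ} {A : Matrix (Fin m) (Fin m) ℝ} (hA : A.IsHermitian) :
    A.charpoly.roots = Finset.univ.val.map hA.eigenvalues := by
  rw [aux_herm_charpoly hA, Finset.prod_eq_multiset_prod]
  have : (Multiset.map (fun i => X - C (hA.eigenvalues i)) Finset.univ.val) =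
      Multiset.map (fun a => X - C a) (Multiset.map hA.eigenvalues Finset.univ.val) := by
    rw [Multiset.map_map]; rfl
  rw [this, Polynomial.roots_multiset_prod_X_sub_C]

end Aux

set_option maxHeartbeats 1000000 in
open Matrix in
/-- The Seidel matrix `S` of an `n`-point two-distance set in `ℝ^d`
has eigenvalue `c = (1+δ²)/(1-δ²)` with multiplicity at least `n-d-3`, and at most
one eigenvalue (with multiplicity) strictly below `c`. -/
theorem stmt2 (d n : ℕ) (hd : 1 ≤ d) (hn : d + 4 ≤ n) (δ : ℝ) (hδ : 1 < δ)
    (P : Fin n → EuclideanSpace ℝ (Fin d))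
    (hdist : ∀ i j : Fin n, i ≠ j → dist (P i) (P j) = 1 ∨ dist (P i) (P j) = δ)
    (h : ℕ) (hh : h ≤ n - 1)
    (hone : ∀ i : Fin (n - 1), (i : ℕ) < h →
      dist (P (Fin.castLE (by omega) i)) (P ⟨n - 1, by omega⟩) = 1)
    (hdel : ∀ i : Fin (n - 1), h ≤ (i : ℕ) →
      dist (P (Fin.castLE (by omega) i)) (P ⟨n - 1, by omega⟩) = δ)
    (M D S : Matrix (Fin (n - 1)) (Fin (n - 1)) ℝ)
    (hM : ∀ i j : Fin (n - 1), M i j =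
      dist (P (Fin.castLE (by omega) i)) (P ⟨n - 1, by omega⟩) ^ 2 +
      dist (P (Fin.castLE (by omega) j)) (P ⟨n - 1, by omega⟩) ^ 2 -
      dist (P (Fin.castLE (by omega) i)) (P (Fin.castLE (by omega) j)) ^ 2)
    (hD : ∀ i j : Fin (n - 1), D i j =
      if (i : ℕ) < h ∧ (j : ℕ) < h then δ ^ 2 - 3
      else if (i : ℕ) < h ∨ (j : ℕ) < h then -(1 + δ ^ 2)
      else 1 - 3 * δ ^ 2)
    (hS : S = (δ ^ 2 - 1)⁻¹ •
      ((2 : ℝ) • M + D - (1 + δ ^ 2) • (1 : Matrix (Fin (n - 1)) (Fin (n - 1)) ℝ)))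
    (c : ℝ) (hc : c = (1 + δ ^ 2) / (1 - δ ^ 2)) :
    (X - C c) ^ (n - d - 3) ∣ S.charpoly ∧
      Multiset.card (S.charpoly.roots.filter (fun x => x < c)) ≤ 1 := by
  classical
  clear hdist
  have hδ2 : (1:ℝ) < δ ^ 2 := by nlinarith
  have he0 : (δ ^ 2 - 1 : ℝ) ≠ 0 := by nlinarith
  set e : ℝ := (δ ^ 2 - 1)⁻¹ with he
  have he_pos : 0 < e := inv_pos.mpr (by nlinarith)
  -- the difference vectors
  set v : Fin (n - 1) → EuclideanSpace ℝ (Fin d) :=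
    fun i => P (Fin.castLE (by omega) i) - P ⟨n - 1, by omega⟩ with hv
  have hnormv : ∀ i : Fin (n - 1),
      dist (P (Fin.castLE (by omega : n - 1 ≤ n) i)) (P ⟨n - 1, by omega⟩) = ‖v i‖ :=
    fun i => dist_eq_norm _ _
  have hu : ∀ i : Fin (n - 1), ‖v i‖ ^ 2 = if (i : ℕ) < h then 1 else δ ^ 2 := by
    intro i
    by_cases hi : (i : ℕ) < h
    · rw [← hnormv i, hone i hi]; simp [hi]
    · rw [← hnormv i, hdel i (le_of_not_gt hi)]; simp [hi]
  have hGij : ∀ i j : Fin (n - 1), M i j = 2 * (inner ℝ (v i) (v j) : ℝ) := by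
    intro i j
    have h1 : dist (P (Fin.castLE (by omega : n - 1 ≤ n) i))
        (P (Fin.castLE (by omega : n - 1 ≤ n) j)) = ‖v i - v j‖ := by
      rw [dist_eq_norm]
      congr 1
      rw [hv]
      exact (sub_sub_sub_cancel_right _ _ _).symm
    have hexp : ‖v i - v j‖ ^ 2 = ‖v i‖ ^ 2 - 2 * (inner ℝ (v i) (v j) : ℝ) + ‖v j‖ ^ 2 :=
      norm_sub_sq_real _ _
    rw [hM i j, h1, hnormv i, hnormv j, hexp]
    ring
  have hSij : ∀ i j : Fin (n - 1), S i j = e * (4 * (inner ℝ (v i) (v j) : ℝ) +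
      ((1 + δ ^ 2) - 2 * ‖v i‖ ^ 2 - 2 * ‖v j‖ ^ 2) -
      (1 + δ ^ 2) * (if i = j then 1 else 0)) := by
    intro i j
    have hDij : D i j = (1 + δ ^ 2) - 2 * ‖v i‖ ^ 2 - 2 * ‖v j‖ ^ 2 := by
      rw [hD i j, hu i, hu j]
      by_cases hi : (i : ℕ) < h <;> by_cases hj : (j : ℕ) < h <;>
        simp [hi, hj] <;> ring
    rw [hS]
    simp only [Matrix.smul_apply, Matrix.sub_apply, Matrix.add_apply, Matrix.one_apply,
      smul_eq_mul]
    rw [hGij i j, hDij]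
    ring
  -- the shifted matrix T = S - c•1
  set T : Matrix (Fin (n - 1)) (Fin (n - 1)) ℝ := S - c • 1 with hTdef
  have hce : c = -(1 + δ ^ 2) * e := by
    have h10 : (1:ℝ) - δ ^ 2 ≠ 0 := by nlinarith
    rw [hc, he]
    field_simp
    ring
  have hTij : ∀ i j : Fin (n - 1), T i j = e * (4 * (inner ℝ (v i) (v j) : ℝ) +
      ((1 + δ ^ 2) - 2 * ‖v i‖ ^ 2 - 2 * ‖v j‖ ^ 2)) := by
    intro i j
    rw [hTdef]
    simp only [Matrix.sub_apply, Matrix.smul_apply, Matrix.one_apply, smul_eq_mul]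
    rw [hSij i j, hce]
    ring
  -- S is symmetric
  have hSymm : S.IsHermitian := by
    ext i j
    simp only [Matrix.conjTranspose_apply, star_trivial]
    rw [hSij i j, hSij j i, real_inner_comm (v j) (v i)]
    by_cases hij : i = j
    · subst hij; ring
    · rw [if_neg hij, if_neg (fun hji => hij hji.symm)]
      ring
  set lam : Fin (n - 1) → ℝ := hSymm.eigenvalues with hlam
  set b := hSymm.eigenvectorBasis with hb
  have hTeig : ∀ i, T *ᵥ ⇑(b i) = (lam i - c) • ⇑(b i) := by
    intro i
    rw [hTdef, Matrix.sub_mulVec, hSymm.mulVec_eigenvectorBasis i,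
      Matrix.smul_mulVec, Matrix.one_mulVec, sub_smul]
  -- the subspace containing the range of T
  set G : Matrix (Fin (n - 1)) (Fin (n - 1)) ℝ :=
    Matrix.of (fun i j => (inner ℝ (v i) (v j) : ℝ)) with hGm
  set w : Fin (n - 1) → ℝ := fun i => (1 + δ ^ 2) / 2 - 2 * ‖v i‖ ^ 2 with hw
  set one1 : Fin (n - 1) → ℝ := fun _ => (1 : ℝ) with hone1
  set U : Submodule ℝ (Fin (n - 1) → ℝ) :=
    LinearMap.range G.mulVecLin ⊔ (Submodule.span ℝ {w} ⊔ Submodule.span ℝ {one1})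
    with hUdef
  have hTmem : ∀ x : Fin (n - 1) → ℝ, T *ᵥ x ∈ U := by
    intro x
    have hx : T *ᵥ x = (e * 4) • (G *ᵥ x) + (e * ∑ j, x j) • w +
        (e * ∑ j, w j * x j) • one1 := by
      funext i
      show (∑ l, T i l * x l) = (e * 4) * (∑ l, G i l * x l) + (e * ∑ l, x l) * w i +
        (e * ∑ l, w l * x l) * one1 i
      have hA : (e * 4) * (∑ l, G i l * x l) = ∑ l, e * 4 * (G i l * x l) :=
        Finset.mul_sum _ _ _
      have hB : (e * ∑ l, x l) * w i = ∑ l, e * x l * w i := by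
        rw [Finset.mul_sum, Finset.sum_mul]
      have hC : (e * ∑ l, w l * x l) * one1 i = ∑ l, e * (w l * x l) := by
        show (e * ∑ l, w l * x l) * 1 = _
        rw [mul_one, Finset.mul_sum]
      rw [hA, hB, hC, ← Finset.sum_add_distrib, ← Finset.sum_add_distrib]
      refine Finset.sum_congr rfl fun l _ => ?_
      rw [hTij i l]
      simp only [hGm, hw, Matrix.of_apply]
      ring
    rw [hx]
    refine Submodule.add_mem _ (Submodule.add_mem _ ?_ ?_) ?_
    · exact Submodule.mem_sup_left
        (Submodule.smul_mem _ _ (LinearMap.mem_range_self G.mulVecLin x))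
    · exact Submodule.mem_sup_right (Submodule.mem_sup_left
        (Submodule.smul_mem _ _ (Submodule.mem_span_singleton_self w)))
    · exact Submodule.mem_sup_right (Submodule.mem_sup_right
        (Submodule.smul_mem _ _ (Submodule.mem_span_singleton_self one1)))
  have hUrank : Module.finrank ℝ U ≤ d + 2 := by
    have h1 : Module.finrank ℝ (LinearMap.range G.mulVecLin) ≤ d := by
      have hGfac : G = (Matrix.of fun i k => v i k) * (Matrix.of fun i k => v i k)ᵀ := by
        ext i j
        simp only [Matrix.mul_apply, Matrix.of_apply, Matrix.transpose_apply, hGm]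
        rw [PiLp.inner_apply]
        simp [RCLike.inner_apply, mul_comm]
      calc Module.finrank ℝ (LinearMap.range G.mulVecLin) = G.rank := rfl
        _ ≤ (Matrix.of fun i k => v i k : Matrix (Fin (n - 1)) (Fin d) ℝ).rank := by
            rw [hGfac]; exact Matrix.rank_mul_le_left _ _
        _ ≤ d := le_trans (Matrix.rank_le_card_width _) (by simp)
    have h2 : Module.finrank ℝ (Submodule.span ℝ ({w} : Set (Fin (n - 1) → ℝ))) ≤ 1 := by
      simpa using finrank_span_le_card ({w} : Set (Fin (n - 1) → ℝ))
    have h3 : Module.finrank ℝ (Submodule.span ℝ ({one1} : Set (Fin (n - 1) → ℝ))) ≤ 1 := by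
      simpa using finrank_span_le_card ({one1} : Set (Fin (n - 1) → ℝ))
    calc Module.finrank ℝ U ≤ Module.finrank ℝ (LinearMap.range G.mulVecLin) +
        Module.finrank ℝ (Submodule.span ℝ {w} ⊔ Submodule.span ℝ {one1} : Submodule ℝ _) :=
          Submodule.finrank_add_le_finrank_add_finrank _ _
      _ ≤ Module.finrank ℝ (LinearMap.range G.mulVecLin) +
          (Module.finrank ℝ (Submodule.span ℝ ({w} : Set (Fin (n - 1) → ℝ))) +
           Module.finrank ℝ (Submodule.span ℝ ({one1} : Set (Fin (n - 1) → ℝ)))) := by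
          exact Nat.add_le_add_left (Submodule.finrank_add_le_finrank_add_finrank _ _) _
      _ ≤ d + (1 + 1) := by
          exact Nat.add_le_add h1 (Nat.add_le_add h2 h3)
      _ = d + 2 := by ring
  -- linear independence of eigenvectors
  have hli0 : LinearIndependent ℝ (fun i : Fin (n - 1) => ⇑(b i)) := by
    have h0 := b.toBasis.linearIndependent
    rw [OrthonormalBasis.coe_toBasis] at h0
    have h2 := h0.map' (WithLp.linearEquiv 2 ℝ (Fin (n - 1) → ℝ)).toLinearMap
      (LinearEquiv.ker _)
    exact h2
  -- the set of eigenvalues different from c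
  set F : Finset (Fin (n - 1)) := Finset.univ.filter (fun i => lam i ≠ c) with hF
  have hFcard : F.card ≤ d + 2 := by
    have hsub : LinearIndependent ℝ (fun i : {i // i ∈ F} => ⇑(b i.1)) :=
      hli0.comp Subtype.val Subtype.val_injective
    have hunits := hsub.units_smul (fun i => Units.mk0 (lam i.1 - c)
      (sub_ne_zero.mpr ((Finset.mem_filter.mp i.2).2)))
    have hli : LinearIndependent ℝ (fun i : {i // i ∈ F} => T *ᵥ ⇑(b i.1)) := by
      convert hunits using 1
      funext i
      rw [hTeig i.1]
      rfl
    have hspan : Submodule.span ℝ (Set.range (fun i : {i // i ∈ F} => T *ᵥ ⇑(b i.1))) ≤ U := by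
      rw [Submodule.span_le]
      rintro _ ⟨i, rfl⟩
      exact hTmem _
    have hcard : Fintype.card {i // i ∈ F} ≤ Module.finrank ℝ U := by
      calc Fintype.card {i // i ∈ F}
          = Module.finrank ℝ (Submodule.span ℝ
            (Set.range (fun i : {i // i ∈ F} => T *ᵥ ⇑(b i.1)))) :=
            (finrank_span_eq_card hli).symm
        _ ≤ Module.finrank ℝ U := Submodule.finrank_mono hspan
    rw [Fintype.card_coe] at hcard
    exact hcard.trans hUrank
  constructor
  · -- divisibility
    rw [aux_herm_charpoly hSymm]
    have hsplit := Finset.prod_filter_mul_prod_filter_not Finset.univ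
      (fun i => lam i = c) (fun i => X - C (lam i))
    rw [← hsplit]
    apply dvd_mul_of_dvd_left
    have hval : ∏ i ∈ Finset.univ.filter (fun i => lam i = c), (X - C (lam i)) =
        (X - C c) ^ (Finset.univ.filter (fun i => lam i = c)).card := by
      rw [Finset.prod_congr rfl (fun i hi => by
        rw [(Finset.mem_filter.mp hi).2]), Finset.prod_const]
    rw [hval]
    apply pow_dvd_pow
    have hcount := Finset.card_filter_add_card_filter_not
      (s := (Finset.univ : Finset (Fin (n - 1)))) (p := fun i => lam i = c)
    have huniv : (Finset.univ : Finset (Fin (n - 1))).card = n - 1 := by simp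
    have : (Finset.univ.filter (fun i => ¬ lam i = c)).card = F.card := rfl
    omega
  · -- at most one root below c
    rw [aux_herm_roots hSymm]
    rw [← Multiset.countP_eq_card_filter, Multiset.countP_map]
    have hfin : (Multiset.filter (fun a => lam a < c) Finset.univ.val).card =
        (Finset.univ.filter (fun i => lam i < c)).card := rfl
    rw [hfin]
    by_contra hlt
    push_neg at hlt
    obtain ⟨i, hi, j, hj, hij⟩ := Finset.one_lt_card.mp hlt
    have hic : lam i < c := (Finset.mem_filter.mp hi).2
    have hjc : lam j < c := (Finset.mem_filter.mp hj).2
    -- choose coefficients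
    set a1 : ℝ := ∑ k, (⇑(b i) : Fin (n - 1) → ℝ) k with ha1
    set a2 : ℝ := ∑ k, (⇑(b j) : Fin (n - 1) → ℝ) k with ha2
    obtain ⟨p, q, hpq, hsum0⟩ : ∃ p q : ℝ, ¬(p = 0 ∧ q = 0) ∧ p * a1 + q * a2 = 0 := by
      by_cases ha : a1 = 0 ∧ a2 = 0
      · exact ⟨1, 0, by simp, by rw [ha.1, ha.2]; ring⟩
      · refine ⟨a2, -a1, ?_, by ring⟩
        rintro ⟨h1, h2⟩
        exact ha ⟨by linarith [neg_eq_zero.mp h2], h1⟩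
    set x : Fin (n - 1) → ℝ := p • ⇑(b i) + q • ⇑(b j) with hxdef
    have hdot : ∀ (uu ww : EuclideanSpace ℝ (Fin (n - 1))),
        dotProduct ⇑uu ⇑ww = (inner ℝ uu ww : ℝ) := by
      intro uu ww
      rw [PiLp.inner_apply]
      simp [dotProduct, RCLike.inner_apply, mul_comm]
    have hob := b.orthonormal
    have hbii : (inner ℝ (b i) (b i) : ℝ) = 1 := by
      have := hob.1 i
      rw [@real_inner_self_eq_norm_sq, this]; norm_num
    have hbjj : (inner ℝ (b j) (b j) : ℝ) = 1 := by
      have := hob.1 j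
      rw [@real_inner_self_eq_norm_sq, this]; norm_num
    have hbij : (inner ℝ (b i) (b j) : ℝ) = 0 := hob.2 hij
    have hbji : (inner ℝ (b j) (b i) : ℝ) = 0 := hob.2 (Ne.symm hij)
    -- first evaluation of the quadratic form
    have hQ1 : dotProduct x (T *ᵥ x) =
        p ^ 2 * (lam i - c) + q ^ 2 * (lam j - c) := by
      have hTx2 : T *ᵥ x = (p * (lam i - c)) • ⇑(b i) + (q * (lam j - c)) • ⇑(b j) := by
        rw [hxdef, Matrix.mulVec_add, Matrix.mulVec_smul, Matrix.mulVec_smul,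
          hTeig i, hTeig j, smul_smul, smul_smul]
      rw [hTx2, hxdef]
      simp only [add_dotProduct, dotProduct_add, smul_dotProduct,
        dotProduct_smul, smul_eq_mul]
      rw [hdot (b i) (b i), hdot (b i) (b j), hdot (b j) (b i), hdot (b j) (b j),
        hbii, hbjj, hbij, hbji]
      ring
    -- second evaluation of the quadratic form
    have hsumx : ∑ k, x k = 0 := by
      rw [hxdef]
      simp only [Pi.add_apply, Pi.smul_apply, smul_eq_mul]
      rw [Finset.sum_add_distrib, ← Finset.mul_sum, ← Finset.mul_sum]
      exact hsum0
    set z : EuclideanSpace ℝ (Fin d) := ∑ k, x k • v k with hz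
    have hvkz : ∀ k, (inner ℝ (v k) z : ℝ) = ∑ l, x l * (inner ℝ (v k) (v l) : ℝ) := by
      intro k
      rw [hz, inner_sum]
      refine Finset.sum_congr rfl fun l _ => ?_
      rw [real_inner_smul_right]
    have hzz : (inner ℝ z z : ℝ) = ∑ k, x k * (inner ℝ (v k) z : ℝ) := by
      conv_lhs => rw [hz, sum_inner]
      refine Finset.sum_congr rfl fun k _ => ?_
      rw [real_inner_smul_left]
    set r : ℝ := ∑ l, x l * ‖v l‖ ^ 2 with hr
    have step1 : ∀ k, (T *ᵥ x) k = e * 4 * (inner ℝ (v k) z : ℝ) - e * 2 * r := by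
      intro k
      have hterm : ∀ l, T k l * x l = e * 4 * (x l * (inner ℝ (v k) (v l) : ℝ)) +
          (e * ((1 + δ ^ 2) - 2 * ‖v k‖ ^ 2)) * x l - e * 2 * (x l * ‖v l‖ ^ 2) := by
        intro l
        rw [hTij k l]
        ring
      show ∑ l, T k l * x l = _
      rw [Finset.sum_congr rfl (fun l _ => hterm l)]
      rw [Finset.sum_sub_distrib, Finset.sum_add_distrib, ← Finset.mul_sum,
        ← Finset.mul_sum, ← Finset.mul_sum, ← hr, hsumx, hvkz k]
      ring
    have hQ2 : dotProduct x (T *ᵥ x) = e * 4 * (inner ℝ z z : ℝ) := by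
      rw [dotProduct]
      rw [Finset.sum_congr rfl (fun k _ => by rw [step1 k])]
      simp only [mul_sub]
      rw [Finset.sum_sub_distrib]
      have e1 : ∑ k, x k * (e * 4 * (inner ℝ (v k) z : ℝ)) =
          e * 4 * ∑ k, x k * (inner ℝ (v k) z : ℝ) := by
        rw [Finset.mul_sum]
        exact Finset.sum_congr rfl fun k _ => by ring
      have e2 : ∑ k, x k * (e * 2 * r) = (∑ k, x k) * (e * 2 * r) := by
        rw [Finset.sum_mul]
      rw [e1, e2, hsumx, ← hzz]
      ring
    have hzznn : (0:ℝ) ≤ (inner ℝ z z : ℝ) := real_inner_self_nonneg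
    have hQpos : 0 ≤ dotProduct x (T *ᵥ x) := by
      rw [hQ2]; positivity
    -- contradiction
    rw [hQ1] at hQpos
    push_neg at hpq
    rcases Classical.em (p = 0) with hp | hp
    · have hq : q ≠ 0 := hpq hp
      have hq2 : 0 < q ^ 2 := by positivity
      nlinarith [mul_pos hq2 (sub_pos.mpr hjc), mul_nonneg (sq_nonneg p) (sub_pos.mpr hic).le]
    · have hp2 : 0 < p ^ 2 := by positivity
      nlinarith [mul_pos hp2 (sub_pos.mpr hic), mul_nonneg (sq_nonneg q) (sub_pos.mpr hjc).le]
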